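/- Monotonicity of KL divergence along alternating half-steps: with π_{t+1}(x,y) = P[y|x]·(π_t)_X(x) the half-step update and π_ES a full-support distribution on T with y|x-conditionals P[y|x], one has D_KL(π_{t+1}, π_ES) ≤ D_KL(π_t, π_ES) for any full-support distribution π_t on T. -/

import Mathlib

open Real Finset

private lemma sub_le_mul_log {p q : ℝ} (hp : 0 ≤ p) (hq : 0 ≤ q)
    (hz : q = 0 → p = 0) : p - q ≤ p * Real.log (p / q) := by
  rcases eq_or_lt_of_le hp with h | hp'
  · simp [← h]; linarith
  · have hq' : 0 < q := lt_of_le_of_ne hq (fun h => by simp [hz h.symm] at hp')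
    have := Real.log_le_sub_one_of_pos (show (0:ℝ) < q / p by positivity)
    have hlog : Real.log (q / p) = - Real.log (p / q) := by
      rw [← Real.log_inv]; congr 1; field_simp
    rw [hlog] at this
    have h2 : q / p - 1 = (q - p) / p := by field_simp
    rw [h2] at this
    nlinarith [mul_le_mul_of_nonneg_left this (le_of_lt hp'),
      mul_div_cancel₀ (q - p) (ne_of_gt hp')]

private lemma gibbs {ι : Type*} (s : Finset ι) (p q : ι → ℝ)
    (hp : ∀ i ∈ s, 0 ≤ p i) (hq : ∀ i ∈ s, 0 ≤ q i)
    (hz : ∀ i ∈ s, q i = 0 → p i = 0)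
    (hsum : ∑ i ∈ s, q i ≤ ∑ i ∈ s, p i) :
    0 ≤ ∑ i ∈ s, p i * Real.log (p i / q i) := by
  have h : ∑ i ∈ s, (p i - q i) ≤ ∑ i ∈ s, p i * Real.log (p i / q i) :=
    Finset.sum_le_sum fun i hi => sub_le_mul_log (hp i hi) (hq i hi) (hz i hi)
  rw [Finset.sum_sub_distrib] at h
  linarith

/-- Monotonicity of KL divergence along alternating half-steps:
`D_KL(pinext, piES) ≤ D_KL(pit, piES)` for the half-step update
`pinext(x,y) = P[y|x]·(pit)_X(x)`. -/
theorem stmt_14 {X Y : Type*} [Fintype X] [Fintype Y] [Nonempty X] [Nonempty Y]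
    (P : X → Y → ℝ) (hPnn : ∀ x y, 0 ≤ P x y) (hP1 : ∀ x, ∑ y, P x y = 1)
    (pit piES : X × Y → ℝ)
    (hsupp : ∀ z : X × Y, (0 < P z.1 z.2 → 0 < pit z) ∧ (P z.1 z.2 = 0 → pit z = 0))
    (hsum : ∑ z, pit z = 1)
    (hESsupp : ∀ z : X × Y, (0 < P z.1 z.2 → 0 < piES z) ∧ (P z.1 z.2 = 0 → piES z = 0))
    (hESsum : ∑ z, piES z = 1)
    (hEScond : ∀ z : X × Y, piES z = P z.1 z.2 * ∑ y', piES (z.1, y')) :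
    ∑ z, (P z.1 z.2 * ∑ y', pit (z.1, y')) *
        Real.log ((P z.1 z.2 * ∑ y', pit (z.1, y')) / piES z) ≤
      ∑ z, pit z * Real.log (pit z / piES z) := by
  set a : X → ℝ := fun x => ∑ y, pit (x, y) with ha
  set b : X → ℝ := fun x => ∑ y, piES (x, y) with hb
  -- positivity of a, b
  have hpitnn : ∀ z : X × Y, 0 ≤ pit z := by
    intro z
    rcases (hPnn z.1 z.2).lt_or_eq with h | h
    · exact le_of_lt ((hsupp z).1 h)
    · exact le_of_eq ((hsupp z).2 h.symm).symm
  have hESnn : ∀ z : X × Y, 0 ≤ piES z := by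
    intro z
    rcases (hPnn z.1 z.2).lt_or_eq with h | h
    · exact le_of_lt ((hESsupp z).1 h)
    · exact le_of_eq ((hESsupp z).2 h.symm).symm
  have hxP : ∀ x : X, ∃ y, 0 < P x y := by
    intro x
    by_contra h
    push_neg at h
    have h0 : ∀ y, P x y = 0 := fun y => le_antisymm (h y) (hPnn x y)
    have h1 := hP1 x
    rw [Finset.sum_eq_zero (fun y _ => h0 y)] at h1
    norm_num at h1
  have hapos : ∀ x, 0 < a x := by
    intro x
    obtain ⟨y, hy⟩ := hxP x
    exact Finset.sum_pos' (fun y _ => hpitnn (x, y)) ⟨y, Finset.mem_univ y, (hsupp (x, y)).1 hy⟩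
  have hbpos : ∀ x, 0 < b x := by
    intro x
    obtain ⟨y, hy⟩ := hxP x
    exact Finset.sum_pos' (fun y _ => hESnn (x, y)) ⟨y, Finset.mem_univ y, (hESsupp (x, y)).1 hy⟩
  -- rewrite both sides as double sums
  rw [Fintype.sum_prod_type, Fintype.sum_prod_type]
  -- LHS inner: equals ∑ x, a x * log (a x / b x)
  have hLHS : ∀ x y, (P x y * a x) * Real.log ((P x y * a x) / piES (x, y))
      = P x y * (a x * Real.log (a x / b x)) := by
    intro x y
    rcases (hPnn x y).lt_or_eq with h | h
    · rw [hEScond (x, y)]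
      change P x y * a x * Real.log ((P x y * a x) / (P x y * b x)) = _
      have : (P x y * a x) / (P x y * b x) = a x / b x := by
        rw [mul_div_mul_left _ _ (ne_of_gt h)]
      simp only [this]
      ring
    · simp [← h]
  -- RHS split
  have hRHS : ∀ x y, pit (x, y) * Real.log (pit (x, y) / piES (x, y))
      = pit (x, y) * Real.log (pit (x, y) / (P x y * a x))
        + pit (x, y) * (Real.log (a x / b x)) := by
    intro x y
    rcases (hPnn x y).lt_or_eq with h | h
    · have hpit : 0 < pit (x, y) := (hsupp (x, y)).1 h
      have hax := hapos x; have hbx := hbpos x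
      rw [hEScond (x, y), ← mul_add, ← Real.log_mul (by positivity) (by positivity)]
      change pit (x, y) * Real.log (pit (x, y) / (P x y * b x)) = _
      congr 2
      field_simp
    · simp [(hsupp (x, y)).2 h.symm]
  simp only [show ∀ x, ∑ y', pit (x, y') = a x from fun x => rfl]
  simp only [hLHS, hRHS]
  -- LHS = ∑ x, a x * log(a x / b x)
  have hL : ∀ x : X, ∑ y, P x y * (a x * Real.log (a x / b x))
      = a x * Real.log (a x / b x) := by
    intro x
    rw [← Finset.sum_mul, hP1 x, one_mul]
  simp only [hL, Finset.sum_add_distrib]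
  -- reduce to Gibbs per x
  have key : ∀ x : X, 0 ≤ ∑ y, pit (x, y) * Real.log (pit (x, y) / (P x y * a x)) := by
    intro x
    apply gibbs _ (fun y => pit (x, y)) (fun y => P x y * a x)
      (fun y _ => hpitnn (x, y)) (fun y _ => mul_nonneg (hPnn x y) (hapos x).le)
    · intro y _ h
      rcases mul_eq_zero.mp h with h | h
      · exact (hsupp (x, y)).2 h
      · exact absurd h (ne_of_gt (hapos x))
    · rw [← Finset.sum_mul, hP1 x, one_mul]
  have : ∀ x : X, ∑ y, pit (x, y) * Real.log (a x / b x) = a x * Real.log (a x / b x) := by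
    intro x; rw [← Finset.sum_mul]
  simp only [this]
  have := Finset.sum_nonneg (fun x (_ : x ∈ (Finset.univ : Finset X)) => key x)
  linarith
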